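/- Let S and F be real q×q matrices with S symmetric invertible, and let S₃ be the 3q×3q block matrix with block rows [S, S Fᵀ, S (F²)ᵀ], [F S, S, S Fᵀ], and [F² S, F S, S]. Then det S₃ = det S · (det (S − F S Fᵀ))². -/

import Mathlib

open Matrix

/-- The 3q×3q IW-AR(2) scale matrix with block rows [S, SFᵀ, S(F²)ᵀ], [FS, S, SFᵀ],
[F²S, FS, S]. -/
noncomputable def iwar2ScaleMatrix {q : ℕ} (S F : Matrix (Fin q) (Fin q) ℝ) :
    Matrix (Fin q ⊕ (Fin q ⊕ Fin q)) (Fin q ⊕ (Fin q ⊕ Fin q)) ℝ :=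
  Matrix.fromBlocks S (Matrix.fromCols (S * Fᵀ) (S * (F ^ 2)ᵀ))
    (Matrix.fromRows (F * S) (F ^ 2 * S))
    (Matrix.fromBlocks S (S * Fᵀ) (F * S) S)

/-- Determinant identity for the IW-AR(2) scale matrix:
det S₃ = det S · (det (S − F S Fᵀ))². -/
theorem iwar2_scale_det {q : ℕ} (S F : Matrix (Fin q) (Fin q) ℝ)
    (hS : S.IsSymm) (hinv : IsUnit S.det) :
    (iwar2ScaleMatrix S F).det = S.det * (S - F * S * Fᵀ).det ^ 2 := by
  haveI := S.invertibleOfIsUnitDet hinv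
  rw [iwar2ScaleMatrix, Matrix.det_fromBlocks₁₁]
  congr 1
  set T : Matrix (Fin q) (Fin q) ℝ := S - F * S * Fᵀ with hT
  have key : (Matrix.fromBlocks S (S * Fᵀ) (F * S) S)
      - Matrix.fromRows (F * S) (F ^ 2 * S) * ⅟S * Matrix.fromCols (S * Fᵀ) (S * (F ^ 2)ᵀ)
      = Matrix.fromBlocks 1 0 F 1 * Matrix.fromBlocks T (T * Fᵀ) 0 T := by
    rw [invOf_eq_nonsing_inv, Matrix.fromRows_mul, Matrix.fromRows_mul_fromCols,
      Matrix.mul_nonsing_inv_cancel_right _ _ hinv, Matrix.mul_nonsing_inv_cancel_right _ _ hinv,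
      Matrix.fromBlocks_multiply]
    have e1 : S - F * (S * Fᵀ) = T := by rw [hT, Matrix.mul_assoc]
    have e2 : S * Fᵀ - F * (S * (F ^ 2)ᵀ) = T * Fᵀ := by
      rw [hT, Matrix.sub_mul, sq, Matrix.transpose_mul]
      noncomm_ring
    have e3 : F * S - F ^ 2 * (S * Fᵀ) = F * T := by
      rw [hT, Matrix.mul_sub, sq]
      noncomm_ring
    have e4 : S - F ^ 2 * (S * (F ^ 2)ᵀ) = F * (T * Fᵀ) + T := by
      rw [hT, sq, Matrix.transpose_mul]
      noncomm_ring
    rw [sub_eq_add_neg, Matrix.fromBlocks_neg, Matrix.fromBlocks_add, Matrix.fromBlocks_inj]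
    refine ⟨?_, ?_, ?_, ?_⟩ <;> simp only [Matrix.one_mul, Matrix.zero_mul, Matrix.mul_one,
      Matrix.mul_zero, add_zero, zero_add, ← sub_eq_add_neg]
    · exact e1
    · exact e2
    · exact e3
    · exact e4
  rw [key, Matrix.det_mul, Matrix.det_fromBlocks_zero₂₁, Matrix.det_fromBlocks_zero₁₂,
    Matrix.det_one, one_mul, one_mul, sq]
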